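/- Let F and F̂ be as in the SAA setting with η* and η̂* their respective minimizers over [0, 2/(ρ(1−γ))]. Then for any λ > 0, P(|F̂(η̂*) − F(η*)| ≥ λ) ≤ (2/λ)·((8−4ρ)/((1−γ)ρ))·exp(−C λ² ρ² (1−γ)² / 8). -/

import Mathlib

open MeasureTheory Set ProbabilityTheory Real
open scoped ENNReal


lemma hoeff_denom_pos {p : ℝ} (hp0 : 0 ≤ p) (hp1 : p ≤ 1) (h : ℝ) :
    0 < 1 - p + p * Real.exp h := by
  rcases eq_or_lt_of_le hp0 with h0 | h0
  · simp [← h0]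
  · have := Real.exp_pos h
    nlinarith

lemma hoeff_psi_deriv {p : ℝ} (hp0 : 0 ≤ p) (hp1 : p ≤ 1) (h : ℝ) :
    HasDerivAt (fun x => p * Real.exp x / (1 - p + p * Real.exp x))
      (p * Real.exp h * (1 - p) / (1 - p + p * Real.exp h) ^ 2) h := by
  have hD := hoeff_denom_pos hp0 hp1 h
  have h1 : HasDerivAt (fun x => p * Real.exp x) (p * Real.exp h) h :=
    (Real.hasDerivAt_exp h).const_mul p
  have h2 : HasDerivAt (fun x => 1 - p + p * Real.exp x) (p * Real.exp h) h :=
    (h1.const_add (1 - p))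
  have := h1.div h2 (ne_of_gt hD)
  exact this.congr_deriv (by ring)

lemma hoeff_psi_deriv_le {p : ℝ} (hp0 : 0 ≤ p) (hp1 : p ≤ 1) (h : ℝ) :
    p * Real.exp h * (1 - p) / (1 - p + p * Real.exp h) ^ 2 ≤ 1 / 4 := by
  have hD := hoeff_denom_pos hp0 hp1 h
  rw [div_le_div_iff₀ (by positivity) (by norm_num)]
  have he := Real.exp_pos h
  nlinarith [sq_nonneg (1 - p - p * Real.exp h), mul_nonneg hp0 he.le]

lemma hoeff_psi_lipschitz {p : ℝ} (hp0 : 0 ≤ p) (hp1 : p ≤ 1) (x y : ℝ) :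
    |p * Real.exp x / (1 - p + p * Real.exp x) - p * Real.exp y / (1 - p + p * Real.exp y)|
      ≤ (1 / 4) * |x - y| := by
  have := Convex.norm_image_sub_le_of_norm_hasDerivWithin_le
    (f := fun x => p * Real.exp x / (1 - p + p * Real.exp x))
    (f' := fun h => p * Real.exp h * (1 - p) / (1 - p + p * Real.exp h) ^ 2)
    (C := 1 / 4) (s := Set.univ)
    (fun z _ => (hoeff_psi_deriv hp0 hp1 z).hasDerivWithinAt)
    (fun z _ => by
      rw [Real.norm_eq_abs, abs_of_nonneg (div_nonneg (mul_nonneg (mul_nonneg hp0 (Real.exp_pos z).le) (by linarith)) (sq_nonneg _))]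
      exact hoeff_psi_deriv_le hp0 hp1 z)
    convex_univ (Set.mem_univ y) (Set.mem_univ x)
  simpa [Real.norm_eq_abs] using this

lemma hoeff_f_deriv {p : ℝ} (hp0 : 0 ≤ p) (hp1 : p ≤ 1) (h : ℝ) :
    HasDerivAt (fun x => p * x + x ^ 2 / 8 - Real.log (1 - p + p * Real.exp x))
      (p + h / 4 - p * Real.exp h / (1 - p + p * Real.exp h)) h := by
  have hD := hoeff_denom_pos hp0 hp1 h
  have h1 : HasDerivAt (fun x : ℝ => p * x + x ^ 2 / 8) (p + h / 4) h := by
    have : HasDerivAt (fun x : ℝ => p * x + x ^ 2 / 8) (p * 1 + 2 * h / 8) h := by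
      exact ((hasDerivAt_id h).const_mul p).add
        (((hasDerivAt_pow 2 h)).div_const 8 |>.congr_deriv (by ring))
    convert this using 1; ring
  have h2 : HasDerivAt (fun x => 1 - p + p * Real.exp x) (p * Real.exp h) h :=
    ((Real.hasDerivAt_exp h).const_mul p).const_add (1 - p)
  have h3 : HasDerivAt (fun x => Real.log (1 - p + p * Real.exp x))
      (p * Real.exp h / (1 - p + p * Real.exp h)) h := h2.log (ne_of_gt hD)
  exact h1.sub h3

/-- Key inequality for Hoeffding's lemma. -/
lemma hoeff_key {p : ℝ} (hp0 : 0 ≤ p) (hp1 : p ≤ 1) (h : ℝ) :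
    1 - p + p * Real.exp h ≤ Real.exp (p * h + h ^ 2 / 8) := by
  set f : ℝ → ℝ := fun x => p * x + x ^ 2 / 8 - Real.log (1 - p + p * Real.exp x) with hf
  set f' : ℝ → ℝ := fun x => p + x / 4 - p * Real.exp x / (1 - p + p * Real.exp x) with hf'
  have hderiv : ∀ x, HasDerivAt f (f' x) x := fun x => hoeff_f_deriv hp0 hp1 x
  have hcont : Continuous f := by
    have : Differentiable ℝ f := fun x => (hderiv x).differentiableAt
    exact this.continuous
  have hderiv_eq : deriv f = f' := funext fun x => (hderiv x).deriv
  have hpsi0 : p * Real.exp 0 / (1 - p + p * Real.exp 0) = p := by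
    rw [Real.exp_zero]; field_simp; ring
  have hf'nonneg : ∀ x ∈ Set.Ici (0:ℝ), 0 ≤ f' x := by
    intro x hx
    have hl := hoeff_psi_lipschitz hp0 hp1 x 0
    rw [hpsi0] at hl
    have hx0 : (0:ℝ) ≤ x := hx
    have habs : |x - 0| = x := by rw [sub_zero, abs_of_nonneg hx0]
    rw [habs, abs_le] at hl
    simp only [hf']
    linarith [hl.2]
  have hf'nonpos : ∀ x ∈ Set.Iic (0:ℝ), f' x ≤ 0 := by
    intro x hx
    have hl := hoeff_psi_lipschitz hp0 hp1 x 0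
    rw [hpsi0] at hl
    have hx0 : x ≤ (0:ℝ) := hx
    have habs : |x - 0| = -x := by rw [sub_zero, abs_of_nonpos hx0]
    rw [habs, abs_le] at hl
    simp only [hf']
    linarith [hl.1]
  have hf0 : f 0 = 0 := by
    simp [hf, Real.exp_zero]
  have hfnonneg : 0 ≤ f h := by
    rcases le_or_gt 0 h with hh | hh
    · have hmono : MonotoneOn f (Set.Ici (0:ℝ)) := by
        apply monotoneOn_of_deriv_nonneg (convex_Ici 0) hcont.continuousOn
          (fun x _ => (hderiv x).differentiableAt.differentiableWithinAt)
        intro x hx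
        rw [hderiv_eq]
        exact hf'nonneg x (le_of_lt (by simpa using hx))
      have := hmono (Set.mem_Ici.2 le_rfl) (Set.mem_Ici.2 hh) hh
      linarith [hf0 ▸ this]
    · have hanti : AntitoneOn f (Set.Iic (0:ℝ)) := by
        apply antitoneOn_of_deriv_nonpos (convex_Iic 0) hcont.continuousOn
          (fun x _ => (hderiv x).differentiableAt.differentiableWithinAt)
        intro x hx
        rw [hderiv_eq]
        exact hf'nonpos x (le_of_lt (by simpa using hx))
      have := hanti (Set.mem_Iic.2 hh.le) (Set.mem_Iic.2 le_rfl) hh.le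
      linarith [hf0 ▸ this]
  have hD := hoeff_denom_pos hp0 hp1 h
  have : Real.log (1 - p + p * Real.exp h) ≤ p * h + h ^ 2 / 8 := by
    simp only [hf] at hfnonneg; linarith
  calc 1 - p + p * Real.exp h = Real.exp (Real.log (1 - p + p * Real.exp h)) :=
        (Real.exp_log hD).symm
    _ ≤ _ := Real.exp_le_exp.2 this

lemma bdd_integrable {Ω : Type*} [MeasurableSpace Ω] (μ : Measure Ω) [IsProbabilityMeasure μ]
    {W : Ω → ℝ} (hW : Measurable W) {M : ℝ} (hM : ∀ ω, |W ω| ≤ M) : Integrable W μ := by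
  apply Integrable.mono' (integrable_const M) hW.aestronglyMeasurable
  filter_upwards with ω
  simpa [Real.norm_eq_abs] using hM ω

/-- Hoeffding's lemma: mgf bound for a centered bounded random variable. -/
lemma hoeff_mgf {Ω : Type*} [MeasurableSpace Ω] (μ : Measure Ω) [IsProbabilityMeasure μ]
    {W : Ω → ℝ} (hW : Measurable W) {a b : ℝ} (hab : ∀ ω, W ω ∈ Set.Icc a b)
    (hcent : ∫ ω, W ω ∂μ = 0) (t : ℝ) :
    ∫ ω, Real.exp (t * W ω) ∂μ ≤ Real.exp (t ^ 2 * (b - a) ^ 2 / 8) := by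
  have hWint : Integrable W μ := by
    apply bdd_integrable μ hW (M := max |a| |b|)
    intro ω
    rw [abs_le]
    refine ⟨?_, le_trans (hab ω).2 (le_trans (le_abs_self b) (le_max_right _ _))⟩
    have h1 : -(max |a| |b|) ≤ a := by
      have := neg_abs_le a; have := le_max_left |a| |b|; linarith
    linarith [(hab ω).1]
  have ha0 : a ≤ 0 := by
    have h1 : ∫ _ : Ω, a ∂μ ≤ ∫ ω, W ω ∂μ :=
      integral_mono (integrable_const a) hWint fun ω => (hab ω).1
    simpa [hcent] using h1
  have hb0 : 0 ≤ b := by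
    have h1 : ∫ ω, W ω ∂μ ≤ ∫ _ : Ω, b ∂μ :=
      integral_mono hWint (integrable_const b) fun ω => (hab ω).2
    simpa [hcent] using h1
  rcases eq_or_lt_of_le (le_trans ha0 hb0 : a ≤ b) with hab' | hab'
  · -- a = b, so a = 0 = b and W = 0
    have ha : a = 0 := le_antisymm ha0 (hab' ▸ hb0)
    have hWz : ∀ ω, W ω = 0 := fun ω =>
      le_antisymm ((hab ω).2.trans_eq (hab'.symm.trans ha)) (ha ▸ (hab ω).1)
    simp only [hWz, mul_zero, Real.exp_zero, integral_const, measure_univ, ENNReal.toReal_one, probReal_univ,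
      smul_eq_mul, one_mul]
    exact Real.one_le_exp (by positivity)
  · set p : ℝ := -a / (b - a) with hp
    have hba : 0 < b - a := by linarith
    have hp0 : 0 ≤ p := div_nonneg (by linarith) hba.le
    have hp1 : p ≤ 1 := by
      rw [hp, div_le_one hba]; linarith
    have hexpint : Integrable (fun ω => Real.exp (t * W ω)) μ := by
      apply bdd_integrable μ (by measurability) (M := Real.exp (|t| * max |a| |b|))
      intro ω
      rw [abs_of_nonneg (Real.exp_pos _).le, Real.exp_le_exp]
      calc t * W ω ≤ |t * W ω| := le_abs_self _
        _ = |t| * |W ω| := abs_mul _ _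
        _ ≤ |t| * max |a| |b| := by
            apply mul_le_mul_of_nonneg_left _ (abs_nonneg t)
            rw [abs_le]
            refine ⟨?_, le_trans (hab ω).2 (le_trans (le_abs_self b) (le_max_right _ _))⟩
            have h1 : -(max |a| |b|) ≤ a := by
              have := neg_abs_le a; have := le_max_left |a| |b|; linarith
            linarith [(hab ω).1]
    -- pointwise convexity bound
    have hpt : ∀ ω, Real.exp (t * W ω) ≤
        (b * Real.exp (t * a) - a * Real.exp (t * b)) / (b - a)
          + (Real.exp (t * b) - Real.exp (t * a)) / (b - a) * W ω := by
      intro ω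
      set θ : ℝ := (W ω - a) / (b - a) with hθ
      have hθ0 : 0 ≤ θ := div_nonneg (by linarith [(hab ω).1]) hba.le
      have hθ1 : θ ≤ 1 := by rw [hθ, div_le_one hba]; linarith [(hab ω).2]
      have hsum : (1 - θ) + θ = 1 := by ring
      have hconv := convexOn_exp.2 (Set.mem_univ (t * a)) (Set.mem_univ (t * b))
        (by linarith) hθ0 hsum
      have harg : (1 - θ) • (t * a) + θ • (t * b) = t * W ω := by
        simp only [smul_eq_mul, hθ]
        field_simp
        ring
      rw [harg] at hconv
      calc Real.exp (t * W ω) ≤ (1 - θ) * Real.exp (t * a) + θ * Real.exp (t * b) := by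
            simpa [smul_eq_mul] using hconv
        _ = (b * Real.exp (t * a) - a * Real.exp (t * b)) / (b - a)
              + (Real.exp (t * b) - Real.exp (t * a)) / (b - a) * W ω := by
            simp only [hθ]
            field_simp
            ring
    -- integrate
    have hint2 : Integrable (fun ω => (b * Real.exp (t * a) - a * Real.exp (t * b)) / (b - a)
        + (Real.exp (t * b) - Real.exp (t * a)) / (b - a) * W ω) μ :=
      (integrable_const _).add (hWint.const_mul _)
    have hI : ∫ ω, Real.exp (t * W ω) ∂μ ≤
        (b * Real.exp (t * a) - a * Real.exp (t * b)) / (b - a) := by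
      calc ∫ ω, Real.exp (t * W ω) ∂μ
          ≤ ∫ ω, ((b * Real.exp (t * a) - a * Real.exp (t * b)) / (b - a)
              + (Real.exp (t * b) - Real.exp (t * a)) / (b - a) * W ω) ∂μ :=
            integral_mono hexpint hint2 hpt
        _ = (b * Real.exp (t * a) - a * Real.exp (t * b)) / (b - a)
              + (Real.exp (t * b) - Real.exp (t * a)) / (b - a) * ∫ ω, W ω ∂μ := by
            rw [integral_add (integrable_const _) (hWint.const_mul _), integral_const,
              integral_const_mul]
            simp
        _ = _ := by rw [hcent]; ring
    refine hI.trans ?_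
    -- algebra + key inequality
    have hkey := hoeff_key hp0 hp1 (t * (b - a))
    have heq1 : (b * Real.exp (t * a) - a * Real.exp (t * b)) / (b - a)
        = Real.exp (t * a) * (1 - p + p * Real.exp (t * (b - a))) := by
      rw [hp]
      rw [show t * b = t * a + t * (b - a) by ring, Real.exp_add]
      field_simp
      ring
    have heq2 : Real.exp (t * a) * Real.exp (p * (t * (b - a)) + (t * (b - a)) ^ 2 / 8)
        = Real.exp (t ^ 2 * (b - a) ^ 2 / 8) := by
      rw [← Real.exp_add]
      congr 1
      rw [hp]
      field_simp
      ring
    calc (b * Real.exp (t * a) - a * Real.exp (t * b)) / (b - a)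
        = Real.exp (t * a) * (1 - p + p * Real.exp (t * (b - a))) := heq1
      _ ≤ Real.exp (t * a) * Real.exp (p * (t * (b - a)) + (t * (b - a)) ^ 2 / 8) :=
          mul_le_mul_of_nonneg_left hkey (Real.exp_pos _).le
      _ = _ := heq2

/-- One-sided Hoeffding inequality for i.i.d.-mean bounded variables. -/
lemma hoeff_one_sided {Ω : Type*} [MeasurableSpace Ω] (μ : Measure Ω) [IsProbabilityMeasure μ]
    (C : ℕ) (hC : 0 < C) (Y : Fin C → Ω → ℝ) (hmeas : ∀ i, Measurable (Y i))
    (hindep : iIndepFun Y μ)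
    (L : ℝ) (hL : 0 < L) (hbd : ∀ i ω, Y i ω ∈ Set.Icc 0 L)
    (m : ℝ) (hm : ∀ i, ∫ ω, Y i ω ∂μ = m)
    (ε : ℝ) (hε : 0 < ε) :
    μ {ω | (C : ℝ) * ε ≤ (∑ i, Y i ω) - C * m} ≤
      ENNReal.ofReal (Real.exp (-(2 * C * ε ^ 2 / L ^ 2))) := by
  set Z : Fin C → Ω → ℝ := fun i ω => Y i ω - m with hZ
  have hZmeas : ∀ i, Measurable (Z i) := fun i => (hmeas i).sub measurable_const
  have hZindep : iIndepFun Z μ :=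
    hindep.comp (fun _ x => x - m) (fun _ => measurable_id.sub measurable_const)
  have hm01 : m ∈ Set.Icc (0:ℝ) L := by
    have i0 : Fin C := ⟨0, hC⟩
    have hint : Integrable (Y i0) μ := by
      apply bdd_integrable μ (hmeas i0) (M := L)
      intro ω
      rw [abs_le]
      exact ⟨by linarith [(hbd i0 ω).1], (hbd i0 ω).2⟩
    constructor
    · rw [← hm i0]
      exact integral_nonneg fun ω => (hbd i0 ω).1
    · rw [← hm i0]
      calc ∫ ω, Y i0 ω ∂μ ≤ ∫ _ : Ω, L ∂μ :=
            integral_mono hint (integrable_const L) fun ω => (hbd i0 ω).2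
        _ = L := by simp
  have hZbd : ∀ i ω, Z i ω ∈ Set.Icc (-m) (L - m) := by
    intro i ω
    simp only [hZ]
    exact ⟨by linarith [(hbd i ω).1], by linarith [(hbd i ω).2]⟩
  have hZint : ∀ i, Integrable (Y i) μ := fun i => by
    apply bdd_integrable μ (hmeas i) (M := L)
    intro ω; rw [abs_le]; exact ⟨by linarith [(hbd i ω).1], (hbd i ω).2⟩
  have hZcent : ∀ i, ∫ ω, Z i ω ∂μ = 0 := fun i => by
    rw [hZ]
    simp only
    rw [integral_sub (hZint i) (integrable_const m), hm i, integral_const]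
    simp
  set t : ℝ := 4 * ε / L ^ 2 with ht
  have ht0 : 0 ≤ t := by positivity
  have hZexpint : ∀ i ∈ Finset.univ, Integrable (fun ω => Real.exp (t * Z i ω)) μ := by
    intro i _
    apply bdd_integrable μ (((hZmeas i).const_mul t).exp) (M := Real.exp (t * L))
    intro ω
    rw [abs_of_nonneg (Real.exp_pos _).le, Real.exp_le_exp]
    have h1 : Z i ω ≤ L - m := (hZbd i ω).2
    have h2 : 0 ≤ m := hm01.1
    nlinarith
  have hsumint : Integrable (fun ω => Real.exp (t * (∑ i, Z i) ω)) μ :=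
    hZindep.integrable_exp_mul_sum hZmeas hZexpint
  have hmgf : mgf (∑ i, Z i) μ t ≤ Real.exp (C * (t ^ 2 * L ^ 2 / 8)) := by
    rw [hZindep.mgf_sum hZmeas Finset.univ]
    calc ∏ i, mgf (Z i) μ t ≤ ∏ _i : Fin C, Real.exp (t ^ 2 * L ^ 2 / 8) := by
          apply Finset.prod_le_prod
          · intro i _; exact mgf_nonneg
          · intro i _
            have := hoeff_mgf μ (hZmeas i) (hZbd i) (hZcent i) t
            simpa [mgf, show L - m - -m = L by ring] using this
      _ = Real.exp (C * (t ^ 2 * L ^ 2 / 8)) := by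
          rw [Finset.prod_const, ← Real.exp_nat_mul]
          simp [Finset.card_univ]
  have hchern := measure_ge_le_exp_mul_mgf (μ := μ) (X := ∑ i, Z i) ((C : ℝ) * ε) ht0 hsumint
  have hset : {ω | (C : ℝ) * ε ≤ (∑ i, Y i ω) - C * m} = {ω | (C : ℝ) * ε ≤ (∑ i, Z i) ω} := by
    ext ω
    simp only [Set.mem_setOf_eq, Finset.sum_apply, hZ, Finset.sum_sub_distrib,
      Finset.sum_const, Finset.card_univ, Fintype.card_fin, nsmul_eq_mul]
  rw [hset]
  have hfin : μ {ω | (C : ℝ) * ε ≤ (∑ i, Z i) ω} ≠ ⊤ := measure_ne_top μ _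
  rw [← ENNReal.ofReal_toReal hfin]
  apply ENNReal.ofReal_le_ofReal
  calc (μ {ω | (C : ℝ) * ε ≤ (∑ i, Z i) ω}).toReal
      ≤ Real.exp (-t * ((C : ℝ) * ε)) * mgf (∑ i, Z i) μ t := hchern
    _ ≤ Real.exp (-t * ((C : ℝ) * ε)) * Real.exp (C * (t ^ 2 * L ^ 2 / 8)) :=
        mul_le_mul_of_nonneg_left hmgf (Real.exp_pos _).le
    _ = Real.exp (-(2 * C * ε ^ 2 / L ^ 2)) := by
        rw [← Real.exp_add]
        congr 1
        rw [ht]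
        field_simp
        ring

lemma hoeff_two_sided {Ω : Type*} [MeasurableSpace Ω] (μ : Measure Ω) [IsProbabilityMeasure μ]
    (C : ℕ) (hC : 0 < C) (Y : Fin C → Ω → ℝ) (hmeas : ∀ i, Measurable (Y i))
    (hindep : iIndepFun Y μ)
    (L : ℝ) (hL : 0 < L) (hbd : ∀ i ω, Y i ω ∈ Set.Icc 0 L)
    (m : ℝ) (hm : ∀ i, ∫ ω, Y i ω ∂μ = m)
    (ε : ℝ) (hε : 0 < ε) :
    μ {ω | ε ≤ |(1 / (C : ℝ)) * ∑ i, Y i ω - m|} ≤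
      ENNReal.ofReal (2 * Real.exp (-(2 * C * ε ^ 2 / L ^ 2))) := by
  have hCpos : (0:ℝ) < C := by exact_mod_cast hC
  set Y' : Fin C → Ω → ℝ := fun i ω => L - Y i ω with hY'
  have hY'meas : ∀ i, Measurable (Y' i) := fun i => measurable_const.sub (hmeas i)
  have hY'indep : iIndepFun Y' μ :=
    hindep.comp (fun _ x => L - x) (fun _ => measurable_const.sub measurable_id)
  have hY'bd : ∀ i ω, Y' i ω ∈ Set.Icc 0 L := by
    intro i ω
    simp only [hY']
    exact ⟨by linarith [(hbd i ω).2], by linarith [(hbd i ω).1]⟩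
  have hYint : ∀ i, Integrable (Y i) μ := fun i => by
    apply bdd_integrable μ (hmeas i) (M := L)
    intro ω; rw [abs_le]; exact ⟨by linarith [(hbd i ω).1], (hbd i ω).2⟩
  have hY'm : ∀ i, ∫ ω, Y' i ω ∂μ = L - m := by
    intro i
    simp only [hY']
    rw [integral_sub (integrable_const L) (hYint i), hm i, integral_const]
    simp
  have hsub : {ω | ε ≤ |(1 / (C : ℝ)) * ∑ i, Y i ω - m|} ⊆
      {ω | (C : ℝ) * ε ≤ (∑ i, Y i ω) - C * m} ∪
      {ω | (C : ℝ) * ε ≤ (∑ i, Y' i ω) - C * (L - m)} := by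
    intro ω hω
    simp only [Set.mem_setOf_eq] at hω
    have hsum' : ∑ i, Y' i ω = C * L - ∑ i, Y i ω := by
      simp only [hY', Finset.sum_sub_distrib, Finset.sum_const, Finset.card_univ,
        Fintype.card_fin, nsmul_eq_mul]
    rcases le_abs.mp hω with h | h
    · left
      simp only [Set.mem_setOf_eq]
      have : (C:ℝ) * ε ≤ C * ((1 / (C : ℝ)) * ∑ i, Y i ω - m) :=
        mul_le_mul_of_nonneg_left h hCpos.le
      calc (C:ℝ) * ε ≤ C * ((1 / (C : ℝ)) * ∑ i, Y i ω - m) := this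
        _ = (∑ i, Y i ω) - C * m := by field_simp
    · right
      simp only [Set.mem_setOf_eq, hsum']
      have : (C:ℝ) * ε ≤ C * (-((1 / (C : ℝ)) * ∑ i, Y i ω - m)) :=
        mul_le_mul_of_nonneg_left h hCpos.le
      calc (C:ℝ) * ε ≤ C * (-((1 / (C : ℝ)) * ∑ i, Y i ω - m)) := this
        _ = (C * L - ∑ i, Y i ω) - C * (L - m) := by field_simp; ring
  calc μ {ω | ε ≤ |(1 / (C : ℝ)) * ∑ i, Y i ω - m|}
      ≤ μ ({ω | (C : ℝ) * ε ≤ (∑ i, Y i ω) - C * m} ∪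
          {ω | (C : ℝ) * ε ≤ (∑ i, Y' i ω) - C * (L - m)}) := measure_mono hsub
    _ ≤ μ {ω | (C : ℝ) * ε ≤ (∑ i, Y i ω) - C * m} +
          μ {ω | (C : ℝ) * ε ≤ (∑ i, Y' i ω) - C * (L - m)} := measure_union_le _ _
    _ ≤ ENNReal.ofReal (Real.exp (-(2 * C * ε ^ 2 / L ^ 2))) +
          ENNReal.ofReal (Real.exp (-(2 * C * ε ^ 2 / L ^ 2))) :=
        add_le_add
          (hoeff_one_sided μ C hC Y hmeas hindep L hL hbd m hm ε hε)
          (hoeff_one_sided μ C hC Y' hY'meas hY'indep L hL hY'bd (L - m) hY'm ε hε)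
    _ = ENNReal.ofReal (2 * Real.exp (-(2 * C * ε ^ 2 / L ^ 2))) := by
        rw [← ENNReal.ofReal_add (Real.exp_pos _).le (Real.exp_pos _).le]
        congr 1; ring

lemma grid_near (L lam : ℝ) (hL : 0 < L) (hlam : 0 < lam) (hle : lam ≤ L)
    (η : ℝ) (hη : η ∈ Set.Icc 0 L) :
    ∃ j ∈ Finset.range ⌈L / lam⌉₊,
      |η - (2 * (j:ℝ) + 1) * L / (2 * (⌈L / lam⌉₊ : ℝ))| ≤ lam / 2 := by
  set d : ℕ := ⌈L / lam⌉₊ with hd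
  have hdpos : 0 < d := by
    rw [hd]
    exact Nat.ceil_pos.mpr (by positivity)
  have hdR : (0:ℝ) < d := by exact_mod_cast hdpos
  have hdge : L / lam ≤ (d:ℝ) := Nat.le_ceil _
  set δ : ℝ := L / d with hδ
  have hδpos : 0 < δ := by positivity
  have hδlam : δ ≤ lam := by
    rw [hδ, div_le_iff₀ hdR]
    calc L = (L / lam) * lam := by field_simp
      _ ≤ (d:ℝ) * lam := by
          apply mul_le_mul_of_nonneg_right hdge hlam.le
      _ = lam * d := by ring
  set k : ℕ := ⌊η / δ⌋₊ with hk
  set j : ℕ := min k (d - 1) with hj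
  have hjd : j < d := by
    rw [hj]
    exact lt_of_le_of_lt (min_le_right _ _) (Nat.sub_lt hdpos one_pos)
  refine ⟨j, Finset.mem_range.mpr hjd, ?_⟩
  have hbracket : (j:ℝ) * δ ≤ η ∧ η ≤ ((j:ℝ) + 1) * δ := by
    have hηδ : 0 ≤ η / δ := div_nonneg hη.1 hδpos.le
    have hfl : (k:ℝ) ≤ η / δ := Nat.floor_le hηδ
    have hfu : η / δ < (k:ℝ) + 1 := Nat.lt_floor_add_one _
    rcases le_or_gt k (d - 1) with hcase | hcase
    · have hjk : j = k := min_eq_left hcase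
      rw [hjk]
      constructor
      · calc (k:ℝ) * δ ≤ (η / δ) * δ := mul_le_mul_of_nonneg_right hfl hδpos.le
          _ = η := by field_simp
      · have := mul_lt_mul_of_pos_right hfu hδpos
        rw [div_mul_cancel₀ _ hδpos.ne'] at this
        linarith
    · have hjk : j = d - 1 := min_eq_right (le_of_lt hcase)
      have hdk : d ≤ k := by omega
      have hcast : ((d - 1 : ℕ) : ℝ) = (d:ℝ) - 1 := by
        rw [Nat.cast_sub hdpos]; simp
      rw [hjk, hcast]
      constructor
      · have h1 : ((d:ℝ)) ≤ (k:ℝ) := by exact_mod_cast hdk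
        have h2 : ((d:ℝ) - 1) * δ ≤ (k:ℝ) * δ :=
          mul_le_mul_of_nonneg_right (by linarith) hδpos.le
        have h3 : (k:ℝ) * δ ≤ η := by
          calc (k:ℝ) * δ ≤ (η / δ) * δ := mul_le_mul_of_nonneg_right hfl hδpos.le
            _ = η := by field_simp
        linarith
      · have : ((d:ℝ) - 1 + 1) * δ = L := by
          have h9 : (d:ℝ) - 1 + 1 = (d:ℝ) := by ring
          rw [h9, hδ, mul_div_cancel₀ _ hdR.ne']
        rw [this]
        exact hη.2
  have hcenter : (2 * (j:ℝ) + 1) * L / (2 * (d:ℝ)) = ((j:ℝ) + 1/2) * δ := by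
    rw [hδ, mul_comm ((j:ℝ) + 1/2) (L / (d:ℝ)), div_mul_eq_mul_div,
      div_eq_div_iff (by positivity : (0:ℝ) < 2 * (d:ℝ)).ne' hdR.ne']
    ring
  rw [hcenter, abs_le]
  constructor
  · have := hbracket.2
    nlinarith
  · have := hbracket.1
    nlinarith

/-- two-sided SAA concentration.  With `F`, `F̂`, minimizers `η*`, `η̂*`
over `[0, 2/(ρ(1−γ))]`, for any `λ > 0`,
`P(|F̂(η̂*) − F(η*)| ≥ λ) ≤ (2/λ)·((8−4ρ)/((1−γ)ρ))·exp(−Cλ²ρ²(1−γ)²/8)`. -/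
theorem rss_saa_two_sided {S Ω : Type*} [MeasurableSpace S] [MeasurableSpace Ω]
    (μ : Measure Ω) [IsProbabilityMeasure μ]
    (P : Measure S) [IsProbabilityMeasure P]
    (γ ρ : ℝ) (hγ0 : 0 ≤ γ) (hγ1 : γ < 1) (hρ0 : 0 < ρ) (hρ1 : ρ ≤ 1)
    (C : ℕ) (hC : 0 < C)
    (V : S → ℝ) (hVmeas : Measurable V) (hV : ∀ s, V s ∈ Set.Icc 0 (1 / (1 - γ)))
    (X : Fin C → Ω → S) (hXmeas : ∀ i, Measurable (X i))
    (hindep : ProbabilityTheory.iIndepFun X μ)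
    (hlaw : ∀ i, Measure.map (X i) μ = P)
    (F : ℝ → ℝ)
    (hF : ∀ η, F η = (∫ s', max (η - V s') 0 ∂P) - η * (1 - ρ))
    (Fhat : Ω → ℝ → ℝ)
    (hFhat : ∀ ω η, Fhat ω η = (1 / (C : ℝ)) * ∑ i, max (η - V (X i ω)) 0 - η * (1 - ρ))
    (ηstar : ℝ) (hηstar : ηstar ∈ Set.Icc (0:ℝ) (2 / (ρ * (1 - γ))))
    (hηstarmin : ∀ η ∈ Set.Icc (0:ℝ) (2 / (ρ * (1 - γ))), F ηstar ≤ F η)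
    (ηhat : Ω → ℝ)
    (hηhat : ∀ ω, ηhat ω ∈ Set.Icc (0:ℝ) (2 / (ρ * (1 - γ))) ∧
      ∀ η ∈ Set.Icc (0:ℝ) (2 / (ρ * (1 - γ))), Fhat ω (ηhat ω) ≤ Fhat ω η)
    (lam : ℝ) (hlam : 0 < lam) :
    μ {ω | |Fhat ω (ηhat ω) - F ηstar| ≥ lam} ≤
      ENNReal.ofReal ((2 / lam) * ((8 - 4 * ρ) / ((1 - γ) * ρ)) *
        Real.exp (-(C * lam ^ 2 * ρ ^ 2 * (1 - γ) ^ 2) / 8)) := by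
  have h1γ : (0:ℝ) < 1 - γ := by linarith
  have hCR : (0:ℝ) < C := by exact_mod_cast hC
  set L : ℝ := 2 / (ρ * (1 - γ)) with hLdef
  have hL : 0 < L := by rw [hLdef]; positivity
  set g : ℝ → S → ℝ := fun η s => max (η - V s) 0 with hgdef
  set m : ℝ → ℝ := fun η => ∫ s, g η s ∂P with hmdef
  have hgmeas : ∀ η, Measurable (g η) := fun η =>
    (measurable_const.sub hVmeas).max measurable_const
  have hgbd : ∀ η, η ∈ Set.Icc (0:ℝ) L → ∀ s, g η s ∈ Set.Icc (0:ℝ) L := by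
    intro η hη s
    exact ⟨le_max_right _ _, max_le (by linarith [(hV s).1, hη.2]) hL.le⟩
  have hgint : ∀ η ∈ Set.Icc (0:ℝ) L, Integrable (g η) P := by
    intro η hη
    apply bdd_integrable P (hgmeas η) (M := L)
    intro s
    rw [abs_le]
    exact ⟨by linarith [(hgbd η hη s).1], (hgbd η hη s).2⟩
  have hmbd : ∀ η ∈ Set.Icc (0:ℝ) L, m η ∈ Set.Icc (0:ℝ) L := by
    intro η hη
    constructor
    · exact integral_nonneg fun s => (hgbd η hη s).1
    · calc m η ≤ ∫ _ : S, L ∂P :=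
          integral_mono (hgint η hη) (integrable_const L) fun s => (hgbd η hη s).2
        _ = L := by simp
  have hgdiff : ∀ {η₁ η₂ : ℝ}, η₂ ≤ η₁ → ∀ s, g η₂ s ≤ g η₁ s ∧ g η₁ s - g η₂ s ≤ η₁ - η₂ := by
    intro η₁ η₂ h s
    constructor
    · exact max_le_max (by linarith) le_rfl
    · have h1 : g η₁ s ≤ max (η₂ - V s) 0 + (η₁ - η₂) := by
        apply max_le
        · linarith [le_max_left (η₂ - V s) 0]
        · linarith [le_max_right (η₂ - V s) 0]
      have h2 : max (η₂ - V s) 0 = g η₂ s := rfl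
      linarith [h2 ▸ h1]
  have hD : ∀ ω η, Fhat ω η - F η = (1 / (C:ℝ)) * (∑ i, g η (X i ω)) - m η := by
    intro ω η
    rw [hFhat, hF]
    simp only [hgdef, hmdef]
    ring
  -- Lipschitz of the deviation
  have hDlip : ∀ ω, ∀ η₁ ∈ Set.Icc (0:ℝ) L, ∀ η₂ ∈ Set.Icc (0:ℝ) L,
      |((1 / (C:ℝ)) * (∑ i, g η₁ (X i ω)) - m η₁) -
        ((1 / (C:ℝ)) * (∑ i, g η₂ (X i ω)) - m η₂)| ≤ |η₁ - η₂| := by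
    have key : ∀ ω, ∀ η₁ ∈ Set.Icc (0:ℝ) L, ∀ η₂ ∈ Set.Icc (0:ℝ) L, η₂ ≤ η₁ →
        |((1 / (C:ℝ)) * (∑ i, g η₁ (X i ω)) - m η₁) -
          ((1 / (C:ℝ)) * (∑ i, g η₂ (X i ω)) - m η₂)| ≤ η₁ - η₂ := by
      intro ω η₁ hη₁ η₂ hη₂ h
      have hsum1 : ∑ i, g η₂ (X i ω) ≤ ∑ i, g η₁ (X i ω) :=
        Finset.sum_le_sum fun i _ => (hgdiff h (X i ω)).1
      have hsum2 : ∑ i, g η₁ (X i ω) ≤ (∑ i, g η₂ (X i ω)) + C * (η₁ - η₂) := by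
        calc ∑ i, g η₁ (X i ω) ≤ ∑ i, (g η₂ (X i ω) + (η₁ - η₂)) :=
              Finset.sum_le_sum fun i _ => by linarith [(hgdiff h (X i ω)).2]
          _ = (∑ i, g η₂ (X i ω)) + C * (η₁ - η₂) := by
              rw [Finset.sum_add_distrib, Finset.sum_const, Finset.card_univ]
              simp [nsmul_eq_mul]
      have hm1 : m η₂ ≤ m η₁ :=
        integral_mono (hgint η₂ hη₂) (hgint η₁ hη₁) fun s => (hgdiff h s).1
      have hm2 : m η₁ ≤ m η₂ + (η₁ - η₂) := by
        calc m η₁ ≤ ∫ s, (g η₂ s + (η₁ - η₂)) ∂P :=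
              integral_mono (hgint η₁ hη₁) ((hgint η₂ hη₂).add (integrable_const _))
                fun s => by linarith [(hgdiff h s).2]
          _ = m η₂ + (η₁ - η₂) := by
              rw [integral_add (hgint η₂ hη₂) (integrable_const _), integral_const]
              simp
              rfl
      have hA1 : (1 / (C:ℝ)) * (∑ i, g η₂ (X i ω)) ≤ (1 / (C:ℝ)) * (∑ i, g η₁ (X i ω)) := by
        apply mul_le_mul_of_nonneg_left hsum1 (by positivity)
      have hA2 : (1 / (C:ℝ)) * (∑ i, g η₁ (X i ω)) ≤
          (1 / (C:ℝ)) * (∑ i, g η₂ (X i ω)) + (η₁ - η₂) := by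
        have := mul_le_mul_of_nonneg_left hsum2 (le_of_lt (by positivity : (0:ℝ) < 1 / (C:ℝ)))
        rw [mul_add] at this
        have hcc : (1 / (C:ℝ)) * ((C:ℝ) * (η₁ - η₂)) = η₁ - η₂ := by
          field_simp
        linarith [hcc ▸ this]
      rw [abs_le]
      constructor <;> [linarith; linarith]
    intro ω η₁ hη₁ η₂ hη₂
    rcases le_total η₂ η₁ with h | h
    · calc _ ≤ η₁ - η₂ := key ω η₁ hη₁ η₂ hη₂ h
        _ ≤ |η₁ - η₂| := le_abs_self _
    · rw [abs_sub_comm, abs_sub_comm η₁ η₂]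
      calc _ ≤ η₂ - η₁ := key ω η₂ hη₂ η₁ hη₁ h
        _ ≤ |η₂ - η₁| := le_abs_self _
  -- bound on the deviation
  have hDbd : ∀ ω, ∀ η ∈ Set.Icc (0:ℝ) L,
      |(1 / (C:ℝ)) * (∑ i, g η (X i ω)) - m η| ≤ L := by
    intro ω η hη
    have h1 : 0 ≤ ∑ i, g η (X i ω) := Finset.sum_nonneg fun i _ => (hgbd η hη (X i ω)).1
    have h2 : ∑ i, g η (X i ω) ≤ C * L := by
      calc ∑ i, g η (X i ω) ≤ ∑ _i : Fin C, L :=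
            Finset.sum_le_sum fun i _ => (hgbd η hη (X i ω)).2
        _ = C * L := by simp [Finset.card_univ, nsmul_eq_mul]
    have h3 : (1 / (C:ℝ)) * (∑ i, g η (X i ω)) ≤ L := by
      have := mul_le_mul_of_nonneg_left h2 (le_of_lt (by positivity : (0:ℝ) < 1 / (C:ℝ)))
      have hcc : (1 / (C:ℝ)) * ((C:ℝ) * L) = L := by field_simp
      linarith [hcc ▸ this]
    have h4 : 0 ≤ (1 / (C:ℝ)) * (∑ i, g η (X i ω)) := by positivity
    rw [abs_le]
    exact ⟨by linarith [(hmbd η hη).2], by linarith [(hmbd η hη).1]⟩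
  -- two-point argument: on the event, some η₀ in the interval has big deviation
  have htwo : ∀ ω, lam ≤ |Fhat ω (ηhat ω) - F ηstar| →
      ∃ η₀ ∈ Set.Icc (0:ℝ) L, lam ≤ |(1 / (C:ℝ)) * (∑ i, g η₀ (X i ω)) - m η₀| := by
    intro ω hω
    rcases le_abs.mp hω with h | h
    · refine ⟨ηstar, hηstar, ?_⟩
      have h1 : Fhat ω (ηhat ω) ≤ Fhat ω ηstar := (hηhat ω).2 ηstar hηstar
      have h2 : lam ≤ Fhat ω ηstar - F ηstar := by linarith
      rw [hD ω ηstar] at h2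
      exact h2.trans (le_abs_self _)
    · refine ⟨ηhat ω, (hηhat ω).1, ?_⟩
      have h1 : F ηstar ≤ F (ηhat ω) := hηstarmin (ηhat ω) (hηhat ω).1
      have h2 : lam ≤ -(Fhat ω (ηhat ω) - F (ηhat ω)) := by linarith
      rw [hD ω (ηhat ω)] at h2
      exact h2.trans (neg_le_abs _)
  rcases le_or_gt lam L with hcase | hcase
  · -- main case
    set d : ℕ := ⌈L / lam⌉₊ with hd
    have hdpos : 0 < d := Nat.ceil_pos.mpr (by positivity)
    have hdR : (0:ℝ) < d := by exact_mod_cast hdpos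
    set c : ℕ → ℝ := fun j => (2 * (j:ℝ) + 1) * L / (2 * (d:ℝ)) with hcdef
    have hcmem : ∀ j ∈ Finset.range d, c j ∈ Set.Icc (0:ℝ) L := by
      intro j hj
      have hjd : (j:ℝ) + 1 ≤ (d:ℝ) := by exact_mod_cast Finset.mem_range.mp hj
      constructor
      · rw [hcdef]; positivity
      · rw [hcdef, div_le_iff₀ (by positivity)]
        nlinarith
    set A : ℕ → Set Ω :=
      fun j => {ω | lam / 2 ≤ |(1 / (C:ℝ)) * ∑ i, g (c j) (X i ω) - m (c j)|} with hAdef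
    have hEsub : {ω | |Fhat ω (ηhat ω) - F ηstar| ≥ lam} ⊆ ⋃ j ∈ Finset.range d, A j := by
      intro ω hω
      obtain ⟨η₀, hη₀I, hη₀⟩ := htwo ω hω
      obtain ⟨j, hjmem, hjnear⟩ := grid_near L lam hL hlam hcase η₀ hη₀I
      have hlip := hDlip ω η₀ hη₀I (c j) (hcmem j hjmem)
      have htri : |(1 / (C:ℝ)) * (∑ i, g η₀ (X i ω)) - m η₀| -
          |(1 / (C:ℝ)) * (∑ i, g (c j) (X i ω)) - m (c j)| ≤
          |((1 / (C:ℝ)) * (∑ i, g η₀ (X i ω)) - m η₀) -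
            ((1 / (C:ℝ)) * (∑ i, g (c j) (X i ω)) - m (c j))| := abs_sub_abs_le_abs_sub _ _
      have hnear : |η₀ - c j| ≤ lam / 2 := hjnear
      apply Set.mem_biUnion hjmem
      show lam / 2 ≤ |(1 / (C:ℝ)) * ∑ i, g (c j) (X i ω) - m (c j)|
      have := hlip.trans hnear
      linarith
    have hAbd : ∀ j ∈ Finset.range d, μ (A j) ≤
        ENNReal.ofReal (2 * Real.exp (-(2 * C * (lam / 2) ^ 2 / L ^ 2))) := by
      intro j hj
      have hm' : ∀ i : Fin C, ∫ ω, g (c j) (X i ω) ∂μ = m (c j) := by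
        intro i
        have h1 : ∫ s, g (c j) s ∂(Measure.map (X i) μ) = ∫ ω, g (c j) (X i ω) ∂μ :=
          integral_map (hXmeas i).aemeasurable (hgmeas (c j)).aestronglyMeasurable
        rw [hlaw i] at h1
        rw [hmdef]
        exact h1.symm
      exact hoeff_two_sided μ C hC (fun i ω => g (c j) (X i ω))
        (fun i => (hgmeas _).comp (hXmeas i))
        (hindep.comp (fun _ => g (c j)) (fun _ => hgmeas _))
        L hL (fun i ω => hgbd _ (hcmem j hj) _) (m (c j)) hm' (lam / 2) (by positivity)
    calc μ {ω | |Fhat ω (ηhat ω) - F ηstar| ≥ lam}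
        ≤ μ (⋃ j ∈ Finset.range d, A j) := measure_mono hEsub
      _ ≤ ∑ j ∈ Finset.range d, μ (A j) := measure_biUnion_finset_le _ _
      _ ≤ ∑ _j ∈ Finset.range d,
            ENNReal.ofReal (2 * Real.exp (-(2 * C * (lam / 2) ^ 2 / L ^ 2))) :=
          Finset.sum_le_sum hAbd
      _ = (d : ℝ≥0∞) * ENNReal.ofReal (2 * Real.exp (-(2 * C * (lam / 2) ^ 2 / L ^ 2))) := by
          rw [Finset.sum_const, Finset.card_range, nsmul_eq_mul]
      _ ≤ ENNReal.ofReal ((2 / lam) * ((8 - 4 * ρ) / ((1 - γ) * ρ)) *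
            Real.exp (-(C * lam ^ 2 * ρ ^ 2 * (1 - γ) ^ 2) / 8)) := by
          rw [← ENNReal.ofReal_natCast d, ← ENNReal.ofReal_mul (by positivity)]
          apply ENNReal.ofReal_le_ofReal
          have hexp_eq : -(2 * (C:ℝ) * (lam / 2) ^ 2 / L ^ 2) =
              -((C:ℝ) * lam ^ 2 * ρ ^ 2 * (1 - γ) ^ 2) / 8 := by
            rw [hLdef]
            field_simp
            ring
          rw [hexp_eq]
          have hd2 : (d:ℝ) ≤ 2 * L / lam := by
            have h1 : (d:ℝ) < L / lam + 1 := by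
              rw [hd]
              exact_mod_cast Nat.ceil_lt_add_one (by positivity)
            have h2 : 1 ≤ L / lam := (one_le_div hlam).mpr hcase
            rw [mul_div_assoc]
            linarith
          have hfac : (d:ℝ) * 2 ≤ (2 / lam) * ((8 - 4 * ρ) / ((1 - γ) * ρ)) := by
            have h3 : 4 * L / lam ≤ (2 / lam) * ((8 - 4 * ρ) / ((1 - γ) * ρ)) := by
              rw [hLdef]
              rw [div_le_iff₀ hlam] at *
              field_simp
              nlinarith [mul_pos hρ0 h1γ, mul_pos hlam (mul_pos h1γ hρ0)]
            calc (d:ℝ) * 2 ≤ (2 * L / lam) * 2 := by linarith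
              _ = 4 * L / lam := by ring
              _ ≤ _ := h3
          calc (d:ℝ) * (2 * Real.exp (-((C:ℝ) * lam ^ 2 * ρ ^ 2 * (1 - γ) ^ 2) / 8))
              = ((d:ℝ) * 2) * Real.exp (-((C:ℝ) * lam ^ 2 * ρ ^ 2 * (1 - γ) ^ 2) / 8) := by
                ring
            _ ≤ ((2 / lam) * ((8 - 4 * ρ) / ((1 - γ) * ρ))) *
                  Real.exp (-((C:ℝ) * lam ^ 2 * ρ ^ 2 * (1 - γ) ^ 2) / 8) :=
                mul_le_mul_of_nonneg_right hfac (Real.exp_pos _).le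
  · -- lam > L : the event is empty
    have hempty : {ω | |Fhat ω (ηhat ω) - F ηstar| ≥ lam} = ∅ := by
      rw [Set.eq_empty_iff_forall_notMem]
      intro ω hω
      obtain ⟨η₀, hη₀I, hη₀⟩ := htwo ω hω
      linarith [hDbd ω η₀ hη₀I]
    rw [hempty, measure_empty]
    exact zero_le
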